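/- Let g11, g12, g22 : ℝ² → ℝ be twice continuously differentiable on an open rectangle D = I × J, forming the symmetric metric matrix G(u,v) = [[g11, g12],[g12, g22]]. Then the following are equivalent: (i) for every center M ∈ D and every offset δ = (α, β) such that the corresponding closed rectangle lies in D, the energies ∫_{-1}^{1} ḋ1(t)ᵀ G(d1(t)) ḋ1(t) dt and ∫_{-1}^{1} ḋ2(t)ᵀ G(d2(t)) ḋ2(t) dt of the two diagonals d1(t) = M + t(α,β), d2(t) = M + t(−α,β) are equal; (ii) g12 ≡ 0 on D and there exist U1, U2 : I → ℝ, V1, V2 : J → ℝ with g11(u,v) = U1(u) + V1(v) and g22(u,v) = U2(u) + V2(v), i.e. the line element is an orthogonal Liouville line element ds² = (U1(u)+V1(v))du² + (U2(u)+V2(v))dv². -/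

import Mathlib

open Set MeasureTheory intervalIntegral

namespace LiouvilleAux

noncomputable def pdv (f : ℝ × ℝ → ℝ) : ℝ × ℝ → ℝ := fun q => fderiv ℝ f q (0, 1)

noncomputable def pm (f : ℝ × ℝ → ℝ) : ℝ × ℝ → ℝ := fun q => fderiv ℝ (pdv f) q (1, 0)

variable {f : ℝ × ℝ → ℝ} {D : Set (ℝ × ℝ)} {q : ℝ × ℝ} {x y : ℝ}

lemma pdv_contDiffOn (hf : ContDiffOn ℝ 2 f D) (hD : IsOpen D) :
    ContDiffOn ℝ 1 (pdv f) D :=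
  (hf.fderiv_of_isOpen hD (by norm_num)).clm_apply contDiffOn_const

lemma pm_continuousOn (hf : ContDiffOn ℝ 2 f D) (hD : IsOpen D) :
    ContinuousOn (pm f) D :=
  (((pdv_contDiffOn hf hD).fderiv_of_isOpen (m := 0) hD (by norm_num)).clm_apply
    contDiffOn_const).continuousOn

lemma diffAt_of_contDiffOn2 (hf : ContDiffOn ℝ 2 f D) (hD : IsOpen D) (hq : q ∈ D) :
    DifferentiableAt ℝ f q :=
  (hf.contDiffAt (hD.mem_nhds hq)).differentiableAt (by norm_num)

lemma pdv_diffAt (hf : ContDiffOn ℝ 2 f D) (hD : IsOpen D) (hq : q ∈ D) :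
    DifferentiableAt ℝ (pdv f) q :=
  ((pdv_contDiffOn hf hD).contDiffAt (hD.mem_nhds hq)).differentiableAt (by norm_num)

/-- derivative in the second coordinate along a shifted line -/
lemma hasDerivAt_line_snd {g : ℝ × ℝ → ℝ} (σ : ℝ) (hg : DifferentiableAt ℝ g (x, y + σ)) :
    HasDerivAt (fun σ' : ℝ => g (x, y + σ')) (fderiv ℝ g (x, y + σ) (0, 1)) σ := by
  have hpath : HasDerivAt (fun σ' : ℝ => ((x : ℝ), y + σ')) ((0 : ℝ), (1 : ℝ)) σ :=
    (hasDerivAt_const σ x).prodMk ((hasDerivAt_id σ).const_add y)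
  exact hg.hasFDerivAt.comp_hasDerivAt σ hpath

lemma hasDerivAt_line_fst {g : ℝ × ℝ → ℝ} (s : ℝ) (hg : DifferentiableAt ℝ g (x + s, y)) :
    HasDerivAt (fun s' : ℝ => g (x + s', y)) (fderiv ℝ g (x + s, y) (1, 0)) s := by
  have hpath : HasDerivAt (fun s' : ℝ => (x + s', (y : ℝ))) ((1 : ℝ), (0 : ℝ)) s :=
    ((hasDerivAt_id s).const_add x).prodMk (hasDerivAt_const s y)
  exact hg.hasFDerivAt.comp_hasDerivAt s hpath

lemma mem_rect {u0 v0 α β s σ : ℝ} (hs : |s| ≤ |α|) (hσ : |σ| ≤ |β|) :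
    (u0 + s, v0 + σ) ∈ Icc (u0 - |α|) (u0 + |α|) ×ˢ Icc (v0 - |β|) (v0 + |β|) := by
  rcases abs_le.mp hs with ⟨h1, h2⟩
  rcases abs_le.mp hσ with ⟨h3, h4⟩
  refine ⟨⟨?_, ?_⟩, ?_, ?_⟩ <;> dsimp only <;> linarith

lemma abs_le_of_uIcc_zero {c σ : ℝ} (h : σ ∈ uIcc (0:ℝ) c) : |σ| ≤ |c| := by
  rcases le_total (0:ℝ) c with hc | hc
  · rw [uIcc_of_le hc] at h
    rw [abs_of_nonneg h.1, abs_of_nonneg hc]; exact h.2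
  · rw [uIcc_of_ge hc] at h
    rw [abs_of_nonpos h.2, abs_of_nonpos hc]; linarith [h.1]

lemma abs_le_of_uIcc_neg {c s : ℝ} (h : s ∈ uIcc (-c) c) : |s| ≤ |c| := by
  rcases le_total (-c) c with hc | hc
  · rw [uIcc_of_le hc] at h
    have : 0 ≤ c := by linarith
    rw [abs_le, abs_of_nonneg this]; exact ⟨h.1, h.2⟩
  · rw [uIcc_of_ge hc] at h
    have : c ≤ 0 := by linarith
    rw [abs_le, abs_of_nonpos this]; exact ⟨by linarith [h.1], by linarith [h.2]⟩

lemma abs_le_one_of_uIcc {t : ℝ} (h : t ∈ uIcc (-1:ℝ) 1) : |t| ≤ 1 := by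
  rw [uIcc_of_le (by norm_num : (-1:ℝ) ≤ 1)] at h
  exact abs_le.mpr ⟨h.1, h.2⟩

lemma odd_integral (h : ℝ → ℝ) (hodd : ∀ t, h (-t) = - h t) :
    ∫ t in (-1:ℝ)..1, h t = 0 := by
  have h1 : (∫ t in (-1:ℝ)..1, h (-t)) = ∫ t in (-(1:ℝ))..(-(-1:ℝ)), h t :=
    intervalIntegral.integral_comp_neg h
  have h2 : (∫ t in (-1:ℝ)..1, h (-t)) = ∫ t in (-1:ℝ)..1, (- h t) := by
    simp only [hodd]
  rw [intervalIntegral.integral_neg] at h2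
  have h3 : (∫ t in (-1:ℝ)..1, h t) = - ∫ t in (-1:ℝ)..1, h t := by
    rw [← h2, h1]; norm_num
  linarith

lemma key_estimate (hD : IsOpen D) (hf : ContDiffOn ℝ 2 f D)
    {u0 v0 α β e : ℝ}
    (hR : Icc (u0 - |α|) (u0 + |α|) ×ˢ Icc (v0 - |β|) (v0 + |β|) ⊆ D)
    (hme : ∀ q ∈ Icc (u0 - |α|) (u0 + |α|) ×ˢ Icc (v0 - |β|) (v0 + |β|),
      |pm f q - pm f (u0, v0)| ≤ e) :
    |(∫ t in (-1:ℝ)..1, (f (u0 + t * α, v0 + t * β) - f (u0 - t * α, v0 + t * β)))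
      - 4 / 3 * (α * β) * pm f (u0, v0)| ≤ 4 * (|α| * |β|) * e := by
  have hcenter : (u0, v0) ∈ Icc (u0 - |α|) (u0 + |α|) ×ˢ Icc (v0 - |β|) (v0 + |β|) := by
    refine ⟨⟨?_, ?_⟩, ?_, ?_⟩ <;> dsimp only <;>
      [linarith [abs_nonneg α]; linarith [abs_nonneg α];
       linarith [abs_nonneg β]; linarith [abs_nonneg β]]
  have he : 0 ≤ e := by simpa using hme _ hcenter
  have memD : ∀ {s σ : ℝ}, |s| ≤ |α| → |σ| ≤ |β| → (u0 + s, v0 + σ) ∈ D :=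
    fun hs hσ => hR (mem_rect hs hσ)
  have memD' : ∀ {s σ : ℝ}, |s| ≤ |α| → |σ| ≤ |β| → (u0 - s, v0 + σ) ∈ D := by
    intro s σ hs hσ
    have h := memD (s := -s) (σ := σ) (by rwa [abs_neg]) hσ
    simpa [sub_eq_add_neg] using h
  have memR : ∀ {s σ : ℝ}, |s| ≤ |α| → |σ| ≤ |β| →
      (u0 + s, v0 + σ) ∈ Icc (u0 - |α|) (u0 + |α|) ×ˢ Icc (v0 - |β|) (v0 + |β|) :=
    fun hs hσ => mem_rect hs hσ
  have hfc : ContinuousOn f D := hf.continuousOn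
  have hdvc : ContinuousOn (pdv f) D := (pdv_contDiffOn hf hD).continuousOn
  have hmc : ContinuousOn (pm f) D := pm_continuousOn hf hD
  set M := pm f (u0, v0) with hM
  -- the per-t identity and error bound
  have claim1 : ∀ t ∈ uIcc (-1:ℝ) 1,
      f (u0 + t * α, v0 + t * β) - f (u0 - t * α, v0 + t * β)
        = (f (u0 + t * α, v0) - f (u0 - t * α, v0)) + 2 * t ^ 2 * (α * β) * M
          + ∫ σ in (0:ℝ)..(t * β),
              ((pdv f (u0 + t * α, v0 + σ) - pdv f (u0 - t * α, v0 + σ)) - 2 * (t * α) * M) := by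
    intro t ht
    have ht1 : |t| ≤ 1 := abs_le_one_of_uIcc ht
    have htα : |t * α| ≤ |α| := by
      rw [abs_mul]; exact mul_le_of_le_one_left (abs_nonneg α) ht1
    have htβ : |t * β| ≤ |β| := by
      rw [abs_mul]; exact mul_le_of_le_one_left (abs_nonneg β) ht1
    have hσmem : ∀ σ ∈ uIcc (0:ℝ) (t * β), |σ| ≤ |β| :=
      fun σ hσ => le_trans (abs_le_of_uIcc_zero hσ) htβ
    have hψderiv : ∀ σ ∈ uIcc (0:ℝ) (t * β),
        HasDerivAt (fun σ' => f (u0 + t * α, v0 + σ') - f (u0 - t * α, v0 + σ'))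
          (pdv f (u0 + t * α, v0 + σ) - pdv f (u0 - t * α, v0 + σ)) σ := by
      intro σ hσ
      have h1 := hasDerivAt_line_snd (x := u0 + t * α) (y := v0) σ
        (diffAt_of_contDiffOn2 hf hD (memD htα (hσmem σ hσ)))
      have h2 := hasDerivAt_line_snd (x := u0 - t * α) (y := v0) σ
        (diffAt_of_contDiffOn2 hf hD (memD' htα (hσmem σ hσ)))
      exact h1.sub h2
    have hψ'cont : ContinuousOn
        (fun σ => pdv f (u0 + t * α, v0 + σ) - pdv f (u0 - t * α, v0 + σ))
        (uIcc (0:ℝ) (t * β)) := by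
      have c1 : ContinuousOn (fun σ : ℝ => pdv f (u0 + t * α, v0 + σ)) (uIcc (0:ℝ) (t * β)) :=
        hdvc.comp ((continuous_const.prodMk (continuous_const.add continuous_id)).continuousOn)
          (fun σ hσ => memD htα (hσmem σ hσ))
      have c2 : ContinuousOn (fun σ : ℝ => pdv f (u0 - t * α, v0 + σ)) (uIcc (0:ℝ) (t * β)) :=
        hdvc.comp ((continuous_const.prodMk (continuous_const.add continuous_id)).continuousOn)
          (fun σ hσ => memD' htα (hσmem σ hσ))
      exact c1.sub c2
    have hint1 : IntervalIntegrable
        (fun σ => pdv f (u0 + t * α, v0 + σ) - pdv f (u0 - t * α, v0 + σ))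
        volume 0 (t * β) := hψ'cont.intervalIntegrable
    have hftc1 : ∫ σ in (0:ℝ)..(t * β),
        (pdv f (u0 + t * α, v0 + σ) - pdv f (u0 - t * α, v0 + σ))
        = (f (u0 + t * α, v0 + t * β) - f (u0 - t * α, v0 + t * β))
          - (f (u0 + t * α, v0 + 0) - f (u0 - t * α, v0 + 0)) :=
      integral_eq_sub_of_hasDerivAt hψderiv hint1
    simp only [add_zero] at hftc1
    have hE : (∫ σ in (0:ℝ)..(t * β),
        ((pdv f (u0 + t * α, v0 + σ) - pdv f (u0 - t * α, v0 + σ)) - 2 * (t * α) * M))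
        = (∫ σ in (0:ℝ)..(t * β),
            (pdv f (u0 + t * α, v0 + σ) - pdv f (u0 - t * α, v0 + σ)))
          - (t * β) * (2 * (t * α) * M) := by
      rw [intervalIntegral.integral_sub hint1 intervalIntegrable_const,
        intervalIntegral.integral_const]
      simp [smul_eq_mul]
    rw [hE, hftc1]; ring
  have claim2 : ∀ t ∈ uIcc (-1:ℝ) 1,
      |∫ σ in (0:ℝ)..(t * β),
          ((pdv f (u0 + t * α, v0 + σ) - pdv f (u0 - t * α, v0 + σ)) - 2 * (t * α) * M)|
        ≤ 2 * (|α| * |β|) * e := by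
    intro t ht
    have ht1 : |t| ≤ 1 := abs_le_one_of_uIcc ht
    have htα : |t * α| ≤ |α| := by
      rw [abs_mul]; exact mul_le_of_le_one_left (abs_nonneg α) ht1
    have htβ : |t * β| ≤ |β| := by
      rw [abs_mul]; exact mul_le_of_le_one_left (abs_nonneg β) ht1
    have hσmem : ∀ σ ∈ uIcc (0:ℝ) (t * β), |σ| ≤ |β| :=
      fun σ hσ => le_trans (abs_le_of_uIcc_zero hσ) htβ
    -- pointwise bound on the inner integrand
    have herr : ∀ σ ∈ uIcc (0:ℝ) (t * β),
        |(pdv f (u0 + t * α, v0 + σ) - pdv f (u0 - t * α, v0 + σ)) - 2 * (t * α) * M|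
          ≤ 2 * |α| * e := by
      intro σ hσ
      have hσβ : |σ| ≤ |β| := hσmem σ hσ
      -- inner FTC
      have hsd : ∀ s ∈ uIcc (-(t * α)) (t * α),
          HasDerivAt (fun s' => pdv f (u0 + s', v0 + σ)) (pm f (u0 + s, v0 + σ)) s := by
        intro s hs
        have hsα : |s| ≤ |α| := le_trans (abs_le_of_uIcc_neg hs) htα
        exact hasDerivAt_line_fst (x := u0) (y := v0 + σ) s
          (pdv_diffAt hf hD (memD hsα hσβ))
      have hmcont : ContinuousOn (fun s : ℝ => pm f (u0 + s, v0 + σ))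
          (uIcc (-(t * α)) (t * α)) := by
        refine hmc.comp
          (((continuous_const.add continuous_id).prodMk continuous_const).continuousOn) ?_
        exact fun s hs => memD (le_trans (abs_le_of_uIcc_neg hs) htα) hσβ
      have hintm : IntervalIntegrable (fun s : ℝ => pm f (u0 + s, v0 + σ))
          volume (-(t * α)) (t * α) := hmcont.intervalIntegrable
      have hftc2 : ∫ s in (-(t * α))..(t * α), pm f (u0 + s, v0 + σ)
          = pdv f (u0 + t * α, v0 + σ) - pdv f (u0 + -(t * α), v0 + σ) :=
        integral_eq_sub_of_hasDerivAt hsd hintm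
      have hrw : u0 + -(t * α) = u0 - t * α := by ring
      rw [hrw] at hftc2
      have hsub : (∫ s in (-(t * α))..(t * α), (pm f (u0 + s, v0 + σ) - M))
          = (∫ s in (-(t * α))..(t * α), pm f (u0 + s, v0 + σ)) - 2 * (t * α) * M := by
        rw [intervalIntegral.integral_sub hintm intervalIntegrable_const,
          intervalIntegral.integral_const]
        rw [smul_eq_mul]; ring
      have hb : ‖∫ s in (-(t * α))..(t * α), (pm f (u0 + s, v0 + σ) - M)‖
          ≤ e * |t * α - (-(t * α))| := by
        refine intervalIntegral.norm_integral_le_of_norm_le_const ?_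
        intro s hs
        have hsα : |s| ≤ |α| :=
          le_trans (abs_le_of_uIcc_neg (Set.uIoc_subset_uIcc hs)) htα
        rw [Real.norm_eq_abs]
        exact hme _ (memR hsα hσβ)
      rw [hsub] at hb
      rw [Real.norm_eq_abs] at hb
      have habs2 : |t * α - (-(t * α))| ≤ 2 * |α| := by
        have : |t * α - (-(t * α))| = 2 * |t * α| := by
          rw [show t * α - (-(t * α)) = 2 * (t * α) by ring, abs_mul]
          norm_num
        rw [this]; linarith
      calc |(pdv f (u0 + t * α, v0 + σ) - pdv f (u0 - t * α, v0 + σ)) - 2 * (t * α) * M|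
          = |(∫ s in (-(t * α))..(t * α), pm f (u0 + s, v0 + σ)) - 2 * (t * α) * M| := by
            rw [hftc2]
        _ ≤ e * |t * α - (-(t * α))| := hb
        _ ≤ e * (2 * |α|) := by
            exact mul_le_mul_of_nonneg_left habs2 he
        _ = 2 * |α| * e := by ring
    have hb2 : ‖∫ σ in (0:ℝ)..(t * β),
        ((pdv f (u0 + t * α, v0 + σ) - pdv f (u0 - t * α, v0 + σ)) - 2 * (t * α) * M)‖
        ≤ (2 * |α| * e) * |t * β - 0| := by
      refine intervalIntegral.norm_integral_le_of_norm_le_const ?_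
      intro σ hσ
      rw [Real.norm_eq_abs]
      exact herr σ (Set.uIoc_subset_uIcc hσ)
    rw [Real.norm_eq_abs] at hb2
    calc |∫ σ in (0:ℝ)..(t * β),
        ((pdv f (u0 + t * α, v0 + σ) - pdv f (u0 - t * α, v0 + σ)) - 2 * (t * α) * M)|
        ≤ (2 * |α| * e) * |t * β - 0| := hb2
      _ ≤ (2 * |α| * e) * |β| := by
          refine mul_le_mul_of_nonneg_left ?_ (by positivity)
          simpa using htβ
      _ = 2 * (|α| * |β|) * e := by ring
  -- continuity of the four pieces on [-1,1]
  have hpathmem : ∀ t ∈ uIcc (-1:ℝ) 1, |t * α| ≤ |α| ∧ |t * β| ≤ |β| := by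
    intro t ht
    have ht1 : |t| ≤ 1 := abs_le_one_of_uIcc ht
    constructor <;> rw [abs_mul]
    · exact mul_le_of_le_one_left (abs_nonneg α) ht1
    · exact mul_le_of_le_one_left (abs_nonneg β) ht1
  have hc1 : ContinuousOn (fun t : ℝ => f (u0 + t * α, v0 + t * β)) (uIcc (-1:ℝ) 1) := by
    refine hfc.comp (Continuous.continuousOn (by fun_prop)) ?_
    exact fun t ht => memD (hpathmem t ht).1 (hpathmem t ht).2
  have hc2 : ContinuousOn (fun t : ℝ => f (u0 - t * α, v0 + t * β)) (uIcc (-1:ℝ) 1) := by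
    refine hfc.comp (Continuous.continuousOn (by fun_prop)) ?_
    exact fun t ht => memD' (hpathmem t ht).1 (hpathmem t ht).2
  have hc3 : ContinuousOn (fun t : ℝ => f (u0 + t * α, v0)) (uIcc (-1:ℝ) 1) := by
    refine hfc.comp (Continuous.continuousOn (by fun_prop)) ?_
    intro t ht
    have := memD (s := t * α) (σ := 0) (hpathmem t ht).1 (by simp [abs_nonneg])
    simpa using this
  have hc4 : ContinuousOn (fun t : ℝ => f (u0 - t * α, v0)) (uIcc (-1:ℝ) 1) := by
    refine hfc.comp (Continuous.continuousOn (by fun_prop)) ?_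
    intro t ht
    have := memD' (s := t * α) (σ := 0) (hpathmem t ht).1 (by simp [abs_nonneg])
    simpa using this
  have hiH : IntervalIntegrable
      (fun t : ℝ => f (u0 + t * α, v0 + t * β) - f (u0 - t * α, v0 + t * β))
      volume (-1) 1 := (hc1.sub hc2).intervalIntegrable
  have hiH0 : IntervalIntegrable
      (fun t : ℝ => f (u0 + t * α, v0) - f (u0 - t * α, v0))
      volume (-1) 1 := (hc3.sub hc4).intervalIntegrable
  have hiQ : IntervalIntegrable (fun t : ℝ => 2 * t ^ 2 * (α * β) * M) volume (-1) 1 :=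
    (Continuous.continuousOn (by fun_prop)).intervalIntegrable
  -- the three integrals
  have hH0 : (∫ t in (-1:ℝ)..1, (f (u0 + t * α, v0) - f (u0 - t * α, v0))) = 0 := by
    apply odd_integral
    intro t
    rw [show u0 + -t * α = u0 - t * α by ring, show u0 - -t * α = u0 + t * α by ring]
    ring
  have hQ : (∫ t in (-1:ℝ)..1, (2 * t ^ 2 * (α * β) * M)) = 4 / 3 * (α * β) * M := by
    have : (∫ t in (-1:ℝ)..1, (2 * t ^ 2 * (α * β) * M))
        = ∫ t in (-1:ℝ)..1, ((2 * (α * β) * M) * t ^ 2) := by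
      congr 1; funext t; ring
    rw [this, intervalIntegral.integral_const_mul, integral_pow]
    norm_num
    ring
  have hsplit : (∫ t in (-1:ℝ)..1,
      ((f (u0 + t * α, v0 + t * β) - f (u0 - t * α, v0 + t * β))
        - (f (u0 + t * α, v0) - f (u0 - t * α, v0)) - 2 * t ^ 2 * (α * β) * M))
      = (∫ t in (-1:ℝ)..1, (f (u0 + t * α, v0 + t * β) - f (u0 - t * α, v0 + t * β)))
        - (∫ t in (-1:ℝ)..1, (f (u0 + t * α, v0) - f (u0 - t * α, v0)))
        - (∫ t in (-1:ℝ)..1, (2 * t ^ 2 * (α * β) * M)) := by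
    rw [intervalIntegral.integral_sub (hiH.sub hiH0) hiQ,
      intervalIntegral.integral_sub hiH hiH0]
  have hbfin : ‖∫ t in (-1:ℝ)..1,
      ((f (u0 + t * α, v0 + t * β) - f (u0 - t * α, v0 + t * β))
        - (f (u0 + t * α, v0) - f (u0 - t * α, v0)) - 2 * t ^ 2 * (α * β) * M)‖
      ≤ (2 * (|α| * |β|) * e) * |1 - (-1:ℝ)| := by
    refine intervalIntegral.norm_integral_le_of_norm_le_const ?_
    intro t ht
    have ht' : t ∈ uIcc (-1:ℝ) 1 := Set.uIoc_subset_uIcc ht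
    rw [Real.norm_eq_abs]
    have h1 := claim1 t ht'
    have h2 := claim2 t ht'
    have : (f (u0 + t * α, v0 + t * β) - f (u0 - t * α, v0 + t * β))
        - (f (u0 + t * α, v0) - f (u0 - t * α, v0)) - 2 * t ^ 2 * (α * β) * M
        = ∫ σ in (0:ℝ)..(t * β),
            ((pdv f (u0 + t * α, v0 + σ) - pdv f (u0 - t * α, v0 + σ)) - 2 * (t * α) * M) := by
      linarith
    rw [this]
    exact h2
  rw [Real.norm_eq_abs, hsplit, hH0, hQ] at hbfin
  simp only [sub_zero] at hbfin
  have h2 : |1 - (-1:ℝ)| = 2 := by norm_num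
  rw [h2] at hbfin
  calc |(∫ t in (-1:ℝ)..1, (f (u0 + t * α, v0 + t * β) - f (u0 - t * α, v0 + t * β)))
      - 4 / 3 * (α * β) * M|
      ≤ (2 * (|α| * |β|) * e) * 2 := hbfin
    _ = 4 * (|α| * |β|) * e := by ring

lemma b_estimate {g : ℝ × ℝ → ℝ} {D : Set (ℝ × ℝ)} (hgc : ContinuousOn g D)
    {u0 v0 α β e : ℝ} (he : 0 ≤ e)
    (hR : Icc (u0 - |α|) (u0 + |α|) ×ˢ Icc (v0 - |β|) (v0 + |β|) ⊆ D)
    (hge : ∀ q ∈ Icc (u0 - |α|) (u0 + |α|) ×ˢ Icc (v0 - |β|) (v0 + |β|),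
      |g q - g (u0, v0)| ≤ e) :
    |(∫ t in (-1:ℝ)..1, (g (u0 + t * α, v0 + t * β) + g (u0 - t * α, v0 + t * β)))
      - 4 * g (u0, v0)| ≤ 4 * e := by
  have memR : ∀ {s σ : ℝ}, |s| ≤ |α| → |σ| ≤ |β| →
      (u0 + s, v0 + σ) ∈ Icc (u0 - |α|) (u0 + |α|) ×ˢ Icc (v0 - |β|) (v0 + |β|) :=
    fun hs hσ => mem_rect hs hσ
  have memR' : ∀ {s σ : ℝ}, |s| ≤ |α| → |σ| ≤ |β| →
      (u0 - s, v0 + σ) ∈ Icc (u0 - |α|) (u0 + |α|) ×ˢ Icc (v0 - |β|) (v0 + |β|) := by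
    intro s σ hs hσ
    have h := memR (s := -s) (σ := σ) (by rwa [abs_neg]) hσ
    simpa [sub_eq_add_neg] using h
  have hpathmem : ∀ t ∈ uIcc (-1:ℝ) 1, |t * α| ≤ |α| ∧ |t * β| ≤ |β| := by
    intro t ht
    have ht1 : |t| ≤ 1 := abs_le_one_of_uIcc ht
    constructor <;> rw [abs_mul]
    · exact mul_le_of_le_one_left (abs_nonneg α) ht1
    · exact mul_le_of_le_one_left (abs_nonneg β) ht1
  have hc1 : ContinuousOn (fun t : ℝ => g (u0 + t * α, v0 + t * β)) (uIcc (-1:ℝ) 1) := by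
    refine hgc.comp (Continuous.continuousOn (by fun_prop)) ?_
    exact fun t ht => hR (memR (hpathmem t ht).1 (hpathmem t ht).2)
  have hc2 : ContinuousOn (fun t : ℝ => g (u0 - t * α, v0 + t * β)) (uIcc (-1:ℝ) 1) := by
    refine hgc.comp (Continuous.continuousOn (by fun_prop)) ?_
    exact fun t ht => hR (memR' (hpathmem t ht).1 (hpathmem t ht).2)
  have hiG : IntervalIntegrable
      (fun t : ℝ => g (u0 + t * α, v0 + t * β) + g (u0 - t * α, v0 + t * β)) volume (-1) 1 :=
    (hc1.add hc2).intervalIntegrable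
  have hsplit : (∫ t in (-1:ℝ)..1,
      ((g (u0 + t * α, v0 + t * β) + g (u0 - t * α, v0 + t * β)) - 2 * g (u0, v0)))
      = (∫ t in (-1:ℝ)..1, (g (u0 + t * α, v0 + t * β) + g (u0 - t * α, v0 + t * β)))
        - (1 - (-1:ℝ)) * (2 * g (u0, v0)) := by
    rw [intervalIntegral.integral_sub hiG intervalIntegrable_const,
      intervalIntegral.integral_const, smul_eq_mul]
  have hb : ‖∫ t in (-1:ℝ)..1,
      ((g (u0 + t * α, v0 + t * β) + g (u0 - t * α, v0 + t * β)) - 2 * g (u0, v0))‖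
      ≤ (2 * e) * |1 - (-1:ℝ)| := by
    refine intervalIntegral.norm_integral_le_of_norm_le_const ?_
    intro t ht
    have ht' := Set.uIoc_subset_uIcc ht
    have h1 := hge _ (memR (hpathmem t ht').1 (hpathmem t ht').2)
    have h2 := hge _ (memR' (hpathmem t ht').1 (hpathmem t ht').2)
    rw [Real.norm_eq_abs]
    have : (g (u0 + t * α, v0 + t * β) + g (u0 - t * α, v0 + t * β)) - 2 * g (u0, v0)
        = (g (u0 + t * α, v0 + t * β) - g (u0, v0)) + (g (u0 - t * α, v0 + t * β) - g (u0, v0)) := by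
      ring
    rw [this]
    calc |_ + _| ≤ _ + _ := abs_add_le _ _
      _ ≤ 2 * e := by linarith
  rw [Real.norm_eq_abs, hsplit] at hb
  have h2 : |1 - (-1:ℝ)| = 2 := by norm_num
  rw [h2] at hb
  have : (1 - (-1:ℝ)) * (2 * g (u0, v0)) = 4 * g (u0, v0) := by ring
  rw [this] at hb
  linarith [hb]

lemma integral_three_split (c1 c2 c3 : ℝ) (F1 F2 F3 : ℝ → ℝ)
    (h1 : ContinuousOn F1 (uIcc (-1:ℝ) 1)) (h2 : ContinuousOn F2 (uIcc (-1:ℝ) 1))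
    (h3 : ContinuousOn F3 (uIcc (-1:ℝ) 1)) :
    ∫ t in (-1:ℝ)..1, (c1 * F1 t + c2 * F2 t + c3 * F3 t)
      = c1 * (∫ t in (-1:ℝ)..1, F1 t) + c2 * (∫ t in (-1:ℝ)..1, F2 t)
        + c3 * (∫ t in (-1:ℝ)..1, F3 t) := by
  have i1 : IntervalIntegrable (fun t => c1 * F1 t) volume (-1) 1 :=
    (continuousOn_const.mul h1).intervalIntegrable
  have i2 : IntervalIntegrable (fun t => c2 * F2 t) volume (-1) 1 :=
    (continuousOn_const.mul h2).intervalIntegrable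
  have i3 : IntervalIntegrable (fun t => c3 * F3 t) volume (-1) 1 :=
    (continuousOn_const.mul h3).intervalIntegrable
  rw [intervalIntegral.integral_add (i1.add i2) i3, intervalIntegral.integral_add i1 i2,
    intervalIntegral.integral_const_mul, intervalIntegral.integral_const_mul,
    intervalIntegral.integral_const_mul]

lemma mem_Icc_center {u0 α x : ℝ} (hx : |x| ≤ |α|) :
    u0 + x ∈ Icc (u0 - |α|) (u0 + |α|) := by
  rcases abs_le.mp hx with ⟨h1, h2⟩
  exact ⟨by linarith, by linarith⟩

lemma mem_Icc_center_sub {u0 α x : ℝ} (hx : |x| ≤ |α|) :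
    u0 - x ∈ Icc (u0 - |α|) (u0 + |α|) := by
  rcases abs_le.mp hx with ⟨h1, h2⟩
  exact ⟨by linarith, by linarith⟩

lemma abs_mul_le_one {t α : ℝ} (ht : |t| ≤ 1) : |t * α| ≤ |α| := by
  rw [abs_mul]; exact mul_le_of_le_one_left (abs_nonneg α) ht

lemma hasDerivAt_fst' {g : ℝ × ℝ → ℝ} (x y : ℝ) (hg : DifferentiableAt ℝ g (x, y)) :
    HasDerivAt (fun s => g (s, y)) (fderiv ℝ g (x, y) (1, 0)) x := by
  have hpath : HasDerivAt (fun s : ℝ => (s, (y : ℝ))) ((1 : ℝ), (0 : ℝ)) x :=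
    (hasDerivAt_id x).prodMk (hasDerivAt_const x y)
  exact hg.hasFDerivAt.comp_hasDerivAt x hpath

lemma hasDerivAt_snd' {g : ℝ × ℝ → ℝ} (x y : ℝ) (hg : DifferentiableAt ℝ g (x, y)) :
    HasDerivAt (fun w => g (x, w)) (fderiv ℝ g (x, y) (0, 1)) y := by
  have hpath : HasDerivAt (fun w : ℝ => ((x : ℝ), w)) ((0 : ℝ), (1 : ℝ)) y :=
    (hasDerivAt_const y x).prodMk (hasDerivAt_id y)
  exact hg.hasFDerivAt.comp_hasDerivAt y hpath

lemma mem_Ioo_of_uIcc {a b x y s : ℝ} (hx : x ∈ Ioo a b) (hy : y ∈ Ioo a b)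
    (hs : s ∈ uIcc x y) : s ∈ Ioo a b := by
  rcases le_total x y with h | h
  · rw [uIcc_of_le h] at hs
    exact ⟨lt_of_lt_of_le hx.1 hs.1, lt_of_le_of_lt hs.2 hy.2⟩
  · rw [uIcc_of_ge h] at hs
    exact ⟨lt_of_lt_of_le hy.1 hs.1, lt_of_le_of_lt hs.2 hx.2⟩

lemma liouville_split {umin umax vmin vmax : ℝ} {f : ℝ × ℝ → ℝ}
    (hf : ContDiffOn ℝ 2 f (Ioo umin umax ×ˢ Ioo vmin vmax))
    (hm : ∀ p ∈ Ioo umin umax ×ˢ Ioo vmin vmax, pm f p = 0)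
    {us vs : ℝ} (hus : us ∈ Ioo umin umax) (hvs : vs ∈ Ioo vmin vmax) :
    ∀ u ∈ Ioo umin umax, ∀ v ∈ Ioo vmin vmax,
      f (u, v) = f (u, vs) + (f (us, v) - f (us, vs)) := by
  have hD : IsOpen (Ioo umin umax ×ˢ Ioo vmin vmax) := isOpen_Ioo.prod isOpen_Ioo
  have hconst : ∀ w ∈ Ioo vmin vmax, ∀ u ∈ Ioo umin umax,
      pdv f (u, w) = pdv f (us, w) := by
    intro w hw u hu
    have hderiv : ∀ s ∈ uIcc us u, HasDerivAt (fun s' => pdv f (s', w)) ((fun _ => (0:ℝ)) s) s := by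
      intro s hs
      have hsD : (s, w) ∈ Ioo umin umax ×ˢ Ioo vmin vmax :=
        ⟨mem_Ioo_of_uIcc hus hu hs, hw⟩
      have h := hasDerivAt_fst' s w (pdv_diffAt hf hD hsD)
      have h0 : fderiv ℝ (pdv f) (s, w) (1, 0) = 0 := hm _ hsD
      rwa [h0] at h
    have h4 := integral_eq_sub_of_hasDerivAt hderiv intervalIntegrable_const
    simp only [intervalIntegral.integral_zero] at h4
    linarith
  intro u hu v hv
  have hderiv2 : ∀ w ∈ uIcc vs v,
      HasDerivAt (fun w' => f (u, w') - f (us, w')) ((fun _ => (0:ℝ)) w) w := by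
    intro w hw'
    have hwJ : w ∈ Ioo vmin vmax := mem_Ioo_of_uIcc hvs hv hw'
    have h1 := hasDerivAt_snd' u w (diffAt_of_contDiffOn2 hf hD ⟨hu, hwJ⟩)
    have h2 := hasDerivAt_snd' us w (diffAt_of_contDiffOn2 hf hD ⟨hus, hwJ⟩)
    have h3 := h1.sub h2
    have h5 : fderiv ℝ f (u, w) (0, 1) - fderiv ℝ f (us, w) (0, 1) = 0 := by
      have h6 := hconst w hwJ u hu
      simp only [pdv] at h6
      rw [h6]
      ring
    rwa [h5] at h3
  have h4 := integral_eq_sub_of_hasDerivAt hderiv2 intervalIntegrable_const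
  simp only [intervalIntegral.integral_zero] at h4
  linarith

lemma rect_subset_ball {u0 v0 α β r : ℝ} (hα : |α| < r) (hβ : |β| < r) :
    ∀ q ∈ Icc (u0 - |α|) (u0 + |α|) ×ˢ Icc (v0 - |β|) (v0 + |β|),
      dist q ((u0, v0) : ℝ × ℝ) < r := by
  rintro ⟨x, y⟩ ⟨hx, hy⟩
  rw [Prod.dist_eq]
  dsimp only at hx hy ⊢
  apply max_lt
  · rw [Real.dist_eq]
    have : |x - u0| ≤ |α| := abs_le.mpr ⟨by linarith [hx.1], by linarith [hx.2]⟩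
    linarith
  · rw [Real.dist_eq]
    have : |y - v0| ≤ |β| := abs_le.mpr ⟨by linarith [hy.1], by linarith [hy.2]⟩
    linarith

end LiouvilleAux

open LiouvilleAux

set_option maxHeartbeats 4000000 in
theorem equal_diagonal_energy_iff_liouville
    (umin umax vmin vmax : ℝ)
    (g11 g12 g22 : ℝ × ℝ → ℝ)
    (hg11 : ContDiffOn ℝ 2 g11 (Set.Ioo umin umax ×ˢ Set.Ioo vmin vmax))
    (hg12 : ContDiffOn ℝ 2 g12 (Set.Ioo umin umax ×ˢ Set.Ioo vmin vmax))
    (hg22 : ContDiffOn ℝ 2 g22 (Set.Ioo umin umax ×ˢ Set.Ioo vmin vmax)) :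
    (∀ u0 v0 α β : ℝ,
      Set.Icc (u0 - |α|) (u0 + |α|) ⊆ Set.Ioo umin umax →
      Set.Icc (v0 - |β|) (v0 + |β|) ⊆ Set.Ioo vmin vmax →
      (∫ t in (-1:ℝ)..1,
          (α ^ 2 * g11 (u0 + t * α, v0 + t * β) +
           2 * α * β * g12 (u0 + t * α, v0 + t * β) +
           β ^ 2 * g22 (u0 + t * α, v0 + t * β))) =
      (∫ t in (-1:ℝ)..1,
          (α ^ 2 * g11 (u0 - t * α, v0 + t * β) -
           2 * α * β * g12 (u0 - t * α, v0 + t * β) +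
           β ^ 2 * g22 (u0 - t * α, v0 + t * β)))) ↔
    ((∀ p ∈ Set.Ioo umin umax ×ˢ Set.Ioo vmin vmax, g12 p = 0) ∧
     ∃ U1 U2 V1 V2 : ℝ → ℝ, ∀ u ∈ Set.Ioo umin umax, ∀ v ∈ Set.Ioo vmin vmax,
       g11 (u, v) = U1 u + V1 v ∧ g22 (u, v) = U2 u + V2 v) := by
  have hD : IsOpen (Set.Ioo umin umax ×ˢ Set.Ioo vmin vmax) := isOpen_Ioo.prod isOpen_Ioo
  constructor
  · intro h
    -- Step 0: the Phi identity
    have hPhi : ∀ u0 v0 α β : ℝ,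
        Set.Icc (u0 - |α|) (u0 + |α|) ⊆ Set.Ioo umin umax →
        Set.Icc (v0 - |β|) (v0 + |β|) ⊆ Set.Ioo vmin vmax →
        α ^ 2 * (∫ t in (-1:ℝ)..1,
            (g11 (u0 + t * α, v0 + t * β) - g11 (u0 - t * α, v0 + t * β)))
        + 2 * α * β * (∫ t in (-1:ℝ)..1,
            (g12 (u0 + t * α, v0 + t * β) + g12 (u0 - t * α, v0 + t * β)))
        + β ^ 2 * (∫ t in (-1:ℝ)..1,
            (g22 (u0 + t * α, v0 + t * β) - g22 (u0 - t * α, v0 + t * β))) = 0 := by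
      intro u0 v0 α β hU hV
      have hm1 : ∀ t ∈ Set.uIcc (-1:ℝ) 1,
          ((u0 + t * α, v0 + t * β) : ℝ × ℝ) ∈ Set.Ioo umin umax ×ˢ Set.Ioo vmin vmax :=
        fun t ht => Set.mk_mem_prod
          (hU (mem_Icc_center (abs_mul_le_one (abs_le_one_of_uIcc ht))))
          (hV (mem_Icc_center (abs_mul_le_one (abs_le_one_of_uIcc ht))))
      have hm2 : ∀ t ∈ Set.uIcc (-1:ℝ) 1,
          ((u0 - t * α, v0 + t * β) : ℝ × ℝ) ∈ Set.Ioo umin umax ×ˢ Set.Ioo vmin vmax :=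
        fun t ht => Set.mk_mem_prod
          (hU (mem_Icc_center_sub (abs_mul_le_one (abs_le_one_of_uIcc ht))))
          (hV (mem_Icc_center (abs_mul_le_one (abs_le_one_of_uIcc ht))))
      have c11 : ContinuousOn (fun t : ℝ => g11 (u0 + t * α, v0 + t * β)) (Set.uIcc (-1:ℝ) 1) :=
        hg11.continuousOn.comp (Continuous.continuousOn (by fun_prop)) hm1
      have c12 : ContinuousOn (fun t : ℝ => g12 (u0 + t * α, v0 + t * β)) (Set.uIcc (-1:ℝ) 1) :=
        hg12.continuousOn.comp (Continuous.continuousOn (by fun_prop)) hm1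
      have c13 : ContinuousOn (fun t : ℝ => g22 (u0 + t * α, v0 + t * β)) (Set.uIcc (-1:ℝ) 1) :=
        hg22.continuousOn.comp (Continuous.continuousOn (by fun_prop)) hm1
      have c21 : ContinuousOn (fun t : ℝ => g11 (u0 - t * α, v0 + t * β)) (Set.uIcc (-1:ℝ) 1) :=
        hg11.continuousOn.comp (Continuous.continuousOn (by fun_prop)) hm2
      have c22 : ContinuousOn (fun t : ℝ => g12 (u0 - t * α, v0 + t * β)) (Set.uIcc (-1:ℝ) 1) :=
        hg12.continuousOn.comp (Continuous.continuousOn (by fun_prop)) hm2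
      have c23 : ContinuousOn (fun t : ℝ => g22 (u0 - t * α, v0 + t * β)) (Set.uIcc (-1:ℝ) 1) :=
        hg22.continuousOn.comp (Continuous.continuousOn (by fun_prop)) hm2
      have e1 : (∫ t in (-1:ℝ)..1,
          (α ^ 2 * g11 (u0 + t * α, v0 + t * β) +
           2 * α * β * g12 (u0 + t * α, v0 + t * β) +
           β ^ 2 * g22 (u0 + t * α, v0 + t * β)))
          = α ^ 2 * (∫ t in (-1:ℝ)..1, g11 (u0 + t * α, v0 + t * β))
            + 2 * α * β * (∫ t in (-1:ℝ)..1, g12 (u0 + t * α, v0 + t * β))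
            + β ^ 2 * (∫ t in (-1:ℝ)..1, g22 (u0 + t * α, v0 + t * β)) :=
        integral_three_split _ _ _ _ _ _ c11 c12 c13
      have e2pre : (∫ t in (-1:ℝ)..1,
          (α ^ 2 * g11 (u0 - t * α, v0 + t * β) -
           2 * α * β * g12 (u0 - t * α, v0 + t * β) +
           β ^ 2 * g22 (u0 - t * α, v0 + t * β)))
          = ∫ t in (-1:ℝ)..1,
          (α ^ 2 * g11 (u0 - t * α, v0 + t * β) +
           (-(2 * α * β)) * g12 (u0 - t * α, v0 + t * β) +
           β ^ 2 * g22 (u0 - t * α, v0 + t * β)) :=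
        intervalIntegral.integral_congr (fun t ht => by ring)
      have e2 : (∫ t in (-1:ℝ)..1,
          (α ^ 2 * g11 (u0 - t * α, v0 + t * β) +
           (-(2 * α * β)) * g12 (u0 - t * α, v0 + t * β) +
           β ^ 2 * g22 (u0 - t * α, v0 + t * β)))
          = α ^ 2 * (∫ t in (-1:ℝ)..1, g11 (u0 - t * α, v0 + t * β))
            + (-(2 * α * β)) * (∫ t in (-1:ℝ)..1, g12 (u0 - t * α, v0 + t * β))
            + β ^ 2 * (∫ t in (-1:ℝ)..1, g22 (u0 - t * α, v0 + t * β)) :=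
        integral_three_split _ _ _ _ _ _ c21 c22 c23
      have heq := h u0 v0 α β hU hV
      rw [e1, e2pre, e2] at heq
      have d11 : (∫ t in (-1:ℝ)..1,
          (g11 (u0 + t * α, v0 + t * β) - g11 (u0 - t * α, v0 + t * β)))
          = (∫ t in (-1:ℝ)..1, g11 (u0 + t * α, v0 + t * β))
            - (∫ t in (-1:ℝ)..1, g11 (u0 - t * α, v0 + t * β)) :=
        intervalIntegral.integral_sub c11.intervalIntegrable c21.intervalIntegrable
      have d12 : (∫ t in (-1:ℝ)..1,
          (g12 (u0 + t * α, v0 + t * β) + g12 (u0 - t * α, v0 + t * β)))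
          = (∫ t in (-1:ℝ)..1, g12 (u0 + t * α, v0 + t * β))
            + (∫ t in (-1:ℝ)..1, g12 (u0 - t * α, v0 + t * β)) :=
        intervalIntegral.integral_add c12.intervalIntegrable c22.intervalIntegrable
      have d22 : (∫ t in (-1:ℝ)..1,
          (g22 (u0 + t * α, v0 + t * β) - g22 (u0 - t * α, v0 + t * β)))
          = (∫ t in (-1:ℝ)..1, g22 (u0 + t * α, v0 + t * β))
            - (∫ t in (-1:ℝ)..1, g22 (u0 - t * α, v0 + t * β)) :=
        intervalIntegral.integral_sub c13.intervalIntegrable c23.intervalIntegrable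
      rw [d11, d12, d22]
      linear_combination heq
    -- Claim A : g12 vanishes on D
    have hA : ∀ p ∈ Set.Ioo umin umax ×ˢ Set.Ioo vmin vmax, g12 p = 0 := by
      rintro ⟨u0, v0⟩ hp
      have key : ∀ e > (0:ℝ), |g12 (u0, v0)| ≤ 2 * e := by
        intro e he
        obtain ⟨r0, hr0, hball⟩ := Metric.isOpen_iff.mp hD _ hp
        obtain ⟨δ1, hδ1, hd1⟩ := Metric.continuousAt_iff.mp
          ((pm_continuousOn hg11 hD).continuousAt (hD.mem_nhds hp)) e he
        obtain ⟨δ2, hδ2, hd2⟩ := Metric.continuousAt_iff.mp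
          ((pm_continuousOn hg22 hD).continuousAt (hD.mem_nhds hp)) e he
        obtain ⟨δ3, hδ3, hd3⟩ := Metric.continuousAt_iff.mp
          (hg12.continuousOn.continuousAt (hD.mem_nhds hp)) e he
        set M11 := pm g11 (u0, v0) with hM11
        set M22 := pm g22 (u0, v0) with hM22
        set r := min (min r0 δ1) (min δ2 δ3) with hrdef
        have hrpos : 0 < r := lt_min (lt_min hr0 hδ1) (lt_min hδ2 hδ3)
        have hCpos : (0:ℝ) < 4/3 * (|M11| + |M22|) + 8 * e + 1 := by positivity
        obtain ⟨ε, hεpos, hεr, hεsq⟩ : ∃ ε : ℝ, 0 < ε ∧ ε < r ∧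
            (4/3 * (|M11| + |M22|) + 8 * e + 1) * (ε * ε) ≤ e := by
          set C := 4/3 * (|M11| + |M22|) + 8 * e + 1 with hCdef
          refine ⟨min (r/2) (Real.sqrt (e / C)),
            lt_min (by linarith) (Real.sqrt_pos.mpr (div_pos he hCpos)),
            lt_of_le_of_lt (min_le_left _ _) (by linarith), ?_⟩
          have h1 : min (r/2) (Real.sqrt (e / C)) ≤ Real.sqrt (e / C) := min_le_right _ _
          have h2 : Real.sqrt (e / C) * Real.sqrt (e / C) = e / C :=
            Real.mul_self_sqrt (le_of_lt (div_pos he hCpos))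
          have h0 : 0 ≤ min (r/2) (Real.sqrt (e / C)) :=
            le_min (by linarith) (Real.sqrt_nonneg _)
          have h3 : min (r/2) (Real.sqrt (e / C)) * min (r/2) (Real.sqrt (e / C)) ≤ e / C := by
            nlinarith
          calc C * (min (r/2) (Real.sqrt (e / C)) * min (r/2) (Real.sqrt (e / C)))
              ≤ C * (e / C) := mul_le_mul_of_nonneg_left h3 hCpos.le
            _ = e := by field_simp
        have hae : |ε| = ε := abs_of_pos hεpos
        have hsubball : ∀ q ∈ Icc (u0 - |ε|) (u0 + |ε|) ×ˢ Icc (v0 - |ε|) (v0 + |ε|),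
            dist q ((u0, v0) : ℝ × ℝ) < r :=
          rect_subset_ball (by rw [hae]; exact hεr) (by rw [hae]; exact hεr)
        have hsubD : Icc (u0 - |ε|) (u0 + |ε|) ×ˢ Icc (v0 - |ε|) (v0 + |ε|)
            ⊆ Set.Ioo umin umax ×ˢ Set.Ioo vmin vmax :=
          fun q hq => hball (lt_of_lt_of_le (hsubball q hq)
            ((min_le_left _ _).trans (min_le_left _ _)))
        have hme11 : ∀ q ∈ Icc (u0 - |ε|) (u0 + |ε|) ×ˢ Icc (v0 - |ε|) (v0 + |ε|),
            |pm g11 q - M11| ≤ e := by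
          intro q hq
          have hdq := hd1 (lt_of_lt_of_le (hsubball q hq)
            ((min_le_left _ _).trans (min_le_right _ _)))
          rw [Real.dist_eq] at hdq
          exact hdq.le
        have hme22 : ∀ q ∈ Icc (u0 - |ε|) (u0 + |ε|) ×ˢ Icc (v0 - |ε|) (v0 + |ε|),
            |pm g22 q - M22| ≤ e := by
          intro q hq
          have hdq := hd2 (lt_of_lt_of_le (hsubball q hq)
            ((min_le_right _ _).trans (min_le_left _ _)))
          rw [Real.dist_eq] at hdq
          exact hdq.le
        have hme12 : ∀ q ∈ Icc (u0 - |ε|) (u0 + |ε|) ×ˢ Icc (v0 - |ε|) (v0 + |ε|),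
            |g12 q - g12 (u0, v0)| ≤ e := by
          intro q hq
          have hdq := hd3 (lt_of_lt_of_le (hsubball q hq)
            ((min_le_right _ _).trans (min_le_right _ _)))
          rw [Real.dist_eq] at hdq
          exact hdq.le
        have hu0c : u0 ∈ Icc (u0 - |ε|) (u0 + |ε|) :=
          ⟨by linarith [abs_nonneg ε], by linarith [abs_nonneg ε]⟩
        have hv0c : v0 ∈ Icc (v0 - |ε|) (v0 + |ε|) :=
          ⟨by linarith [abs_nonneg ε], by linarith [abs_nonneg ε]⟩
        have hU : Icc (u0 - |ε|) (u0 + |ε|) ⊆ Set.Ioo umin umax :=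
          fun x hx => (hsubD (Set.mk_mem_prod hx hv0c)).1
        have hV : Icc (v0 - |ε|) (v0 + |ε|) ⊆ Set.Ioo vmin vmax :=
          fun y hy => (hsubD (Set.mk_mem_prod hu0c hy)).2
        have hphi := hPhi u0 v0 ε ε hU hV
        have k11 := key_estimate hD hg11 hsubD hme11
        have k22 := key_estimate hD hg22 hsubD hme22
        have kB := b_estimate hg12.continuousOn he.le hsubD hme12
        rw [hae] at k11 k22
        set A11 := ∫ t in (-1:ℝ)..1,
          (g11 (u0 + t * ε, v0 + t * ε) - g11 (u0 - t * ε, v0 + t * ε)) with hA11def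
        set A22 := ∫ t in (-1:ℝ)..1,
          (g22 (u0 + t * ε, v0 + t * ε) - g22 (u0 - t * ε, v0 + t * ε)) with hA22def
        set B := ∫ t in (-1:ℝ)..1,
          (g12 (u0 + t * ε, v0 + t * ε) + g12 (u0 - t * ε, v0 + t * ε)) with hBdef
        have hphi' : A11 + 2 * B + A22 = 0 := by
          have hne : ε ^ 2 ≠ 0 := pow_ne_zero _ (ne_of_gt hεpos)
          have h' : ε ^ 2 * (A11 + 2 * B + A22) = 0 := by linear_combination hphi
          exact (mul_eq_zero.mp h').resolve_left hne
        have n11 : |A11| ≤ 4/3 * (ε * ε) * |M11| + 4 * (ε * ε) * e := by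
          have h0 : |A11| ≤ |A11 - 4/3 * (ε * ε) * M11| + |4/3 * (ε * ε) * M11| := by
            have h := abs_add_le (A11 - 4/3 * (ε * ε) * M11) (4/3 * (ε * ε) * M11)
            simpa using h
          have h1 : |4/3 * (ε * ε) * M11| = 4/3 * (ε * ε) * |M11| := by
            rw [abs_mul, abs_of_nonneg (by positivity : (0:ℝ) ≤ 4/3 * (ε * ε))]
          linarith [k11]
        have n22 : |A22| ≤ 4/3 * (ε * ε) * |M22| + 4 * (ε * ε) * e := by
          have h0 : |A22| ≤ |A22 - 4/3 * (ε * ε) * M22| + |4/3 * (ε * ε) * M22| := by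
            have h := abs_add_le (A22 - 4/3 * (ε * ε) * M22) (4/3 * (ε * ε) * M22)
            simpa using h
          have h1 : |4/3 * (ε * ε) * M22| = 4/3 * (ε * ε) * |M22| := by
            rw [abs_mul, abs_of_nonneg (by positivity : (0:ℝ) ≤ 4/3 * (ε * ε))]
          linarith [k22]
        have nB : 4 * |g12 (u0, v0)| ≤ |B| + 4 * e := by
          have h0 : |4 * g12 (u0, v0)| ≤ |4 * g12 (u0, v0) - B| + |B| := by
            have h := abs_add_le (4 * g12 (u0, v0) - B) B
            simpa using h
          have h1 : |4 * g12 (u0, v0) - B| = |B - 4 * g12 (u0, v0)| := abs_sub_comm _ _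
          have h2 : |4 * g12 (u0, v0)| = 4 * |g12 (u0, v0)| := by
            rw [abs_mul]; norm_num
          linarith [kB]
        have hBb : 2 * |B| ≤ |A11| + |A22| := by
          have hsum : A11 + A22 = -(2 * B) := by linarith
          have h3 := abs_add_le A11 A22
          rw [hsum, abs_neg, abs_mul, abs_two] at h3
          linarith
        have hBe : 2 * |B| ≤ e := by
          nlinarith [hεsq, mul_nonneg hεpos.le hεpos.le, n11, n22, hBb]
        linarith [hBe, nB, he]
      by_contra hc0
      have hpos : 0 < |g12 (u0, v0)| := abs_pos.mpr hc0
      have hk := key (|g12 (u0, v0)| / 4) (by linarith)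
      linarith
    -- Claim B : mixed partials vanish on D
    have hMzero : ∀ p ∈ Set.Ioo umin umax ×ˢ Set.Ioo vmin vmax,
        pm g11 p = 0 ∧ pm g22 p = 0 := by
      rintro ⟨u0, v0⟩ hp
      set M11 := pm g11 (u0, v0) with hM11
      set M22 := pm g22 (u0, v0) with hM22
      have hS : ∀ a b : ℝ, 0 < a → 0 < b → a ^ 2 * M11 + b ^ 2 * M22 = 0 := by
        intro a b ha hb
        have key2 : ∀ e > (0:ℝ), |a ^ 2 * M11 + b ^ 2 * M22| ≤ 3 * (a ^ 2 + b ^ 2) * e := by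
          intro e he
          obtain ⟨r0, hr0, hball⟩ := Metric.isOpen_iff.mp hD _ hp
          obtain ⟨δ1, hδ1, hd1⟩ := Metric.continuousAt_iff.mp
            ((pm_continuousOn hg11 hD).continuousAt (hD.mem_nhds hp)) e he
          obtain ⟨δ2, hδ2, hd2⟩ := Metric.continuousAt_iff.mp
            ((pm_continuousOn hg22 hD).continuousAt (hD.mem_nhds hp)) e he
          set r := min r0 (min δ1 δ2) with hrdef
          have hrpos : 0 < r := lt_min hr0 (lt_min hδ1 hδ2)
          obtain ⟨ε, hεpos, hαr, hβr⟩ : ∃ ε : ℝ, 0 < ε ∧ a * ε < r ∧ b * ε < r := by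
            refine ⟨r / (2 * (a + b)), by positivity, ?_, ?_⟩
            · have h2ab : (0:ℝ) < 2 * (a + b) := by linarith
              have heq : a * (r / (2 * (a + b))) = a * r / (2 * (a + b)) := by ring
              rw [heq, div_lt_iff₀ h2ab]
              nlinarith
            · have h2ab : (0:ℝ) < 2 * (a + b) := by linarith
              have heq : b * (r / (2 * (a + b))) = b * r / (2 * (a + b)) := by ring
              rw [heq, div_lt_iff₀ h2ab]
              nlinarith
          have haε : |a * ε| = a * ε := abs_of_pos (mul_pos ha hεpos)
          have hbε : |b * ε| = b * ε := abs_of_pos (mul_pos hb hεpos)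
          have hsubball : ∀ q ∈ Icc (u0 - |a * ε|) (u0 + |a * ε|) ×ˢ
              Icc (v0 - |b * ε|) (v0 + |b * ε|), dist q ((u0, v0) : ℝ × ℝ) < r :=
            rect_subset_ball (by rw [haε]; exact hαr) (by rw [hbε]; exact hβr)
          have hsubD : Icc (u0 - |a * ε|) (u0 + |a * ε|) ×ˢ Icc (v0 - |b * ε|) (v0 + |b * ε|)
              ⊆ Set.Ioo umin umax ×ˢ Set.Ioo vmin vmax :=
            fun q hq => hball (lt_of_lt_of_le (hsubball q hq) (min_le_left _ _))
          have hme11 : ∀ q ∈ Icc (u0 - |a * ε|) (u0 + |a * ε|) ×ˢ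
              Icc (v0 - |b * ε|) (v0 + |b * ε|), |pm g11 q - M11| ≤ e := by
            intro q hq
            have hdq := hd1 (lt_of_lt_of_le (hsubball q hq)
              ((min_le_right _ _).trans (min_le_left _ _)))
            rw [Real.dist_eq] at hdq
            exact hdq.le
          have hme22 : ∀ q ∈ Icc (u0 - |a * ε|) (u0 + |a * ε|) ×ˢ
              Icc (v0 - |b * ε|) (v0 + |b * ε|), |pm g22 q - M22| ≤ e := by
            intro q hq
            have hdq := hd2 (lt_of_lt_of_le (hsubball q hq)
              ((min_le_right _ _).trans (min_le_right _ _)))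
            rw [Real.dist_eq] at hdq
            exact hdq.le
          have hu0c : u0 ∈ Icc (u0 - |a * ε|) (u0 + |a * ε|) :=
            ⟨by linarith [abs_nonneg (a * ε)], by linarith [abs_nonneg (a * ε)]⟩
          have hv0c : v0 ∈ Icc (v0 - |b * ε|) (v0 + |b * ε|) :=
            ⟨by linarith [abs_nonneg (b * ε)], by linarith [abs_nonneg (b * ε)]⟩
          have hU : Icc (u0 - |a * ε|) (u0 + |a * ε|) ⊆ Set.Ioo umin umax :=
            fun x hx => (hsubD (Set.mk_mem_prod hx hv0c)).1
          have hV : Icc (v0 - |b * ε|) (v0 + |b * ε|) ⊆ Set.Ioo vmin vmax :=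
            fun y hy => (hsubD (Set.mk_mem_prod hu0c hy)).2
          have hphi := hPhi u0 v0 (a * ε) (b * ε) hU hV
          have k11 := key_estimate hD hg11 hsubD hme11
          have k22 := key_estimate hD hg22 hsubD hme22
          rw [haε, hbε] at k11 k22
          have hBzero : (∫ t in (-1:ℝ)..1,
              (g12 (u0 + t * (a * ε), v0 + t * (b * ε)) +
               g12 (u0 - t * (a * ε), v0 + t * (b * ε)))) = 0 := by
            have hEq : Set.EqOn (fun t : ℝ =>
                g12 (u0 + t * (a * ε), v0 + t * (b * ε)) +
                g12 (u0 - t * (a * ε), v0 + t * (b * ε))) (fun _ => (0:ℝ))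
                (Set.uIcc (-1:ℝ) 1) := by
              intro t ht
              have m1 : ((u0 + t * (a * ε), v0 + t * (b * ε)) : ℝ × ℝ)
                  ∈ Set.Ioo umin umax ×ˢ Set.Ioo vmin vmax :=
                Set.mk_mem_prod
                  (hU (mem_Icc_center (abs_mul_le_one (abs_le_one_of_uIcc ht))))
                  (hV (mem_Icc_center (abs_mul_le_one (abs_le_one_of_uIcc ht))))
              have m2 : ((u0 - t * (a * ε), v0 + t * (b * ε)) : ℝ × ℝ)
                  ∈ Set.Ioo umin umax ×ˢ Set.Ioo vmin vmax :=
                Set.mk_mem_prod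
                  (hU (mem_Icc_center_sub (abs_mul_le_one (abs_le_one_of_uIcc ht))))
                  (hV (mem_Icc_center (abs_mul_le_one (abs_le_one_of_uIcc ht))))
              show g12 _ + g12 _ = 0
              rw [hA _ m1, hA _ m2]
              ring
            rw [intervalIntegral.integral_congr hEq, intervalIntegral.integral_zero]
          set A11 := ∫ t in (-1:ℝ)..1,
            (g11 (u0 + t * (a * ε), v0 + t * (b * ε)) -
             g11 (u0 - t * (a * ε), v0 + t * (b * ε))) with hA11def
          set A22 := ∫ t in (-1:ℝ)..1,
            (g22 (u0 + t * (a * ε), v0 + t * (b * ε)) -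
             g22 (u0 - t * (a * ε), v0 + t * (b * ε))) with hA22def
          rw [hBzero] at hphi
          have heq2 : (a * ε) ^ 2 * A11 + (b * ε) ^ 2 * A22 = 0 := by
            linear_combination hphi
          have t1 : |(a * ε) ^ 2 * (A11 - 4/3 * (a * ε * (b * ε)) * M11)|
              ≤ (a * ε) ^ 2 * (4 * (a * ε * (b * ε)) * e) := by
            rw [abs_mul, abs_of_nonneg (sq_nonneg (a * ε))]
            exact mul_le_mul_of_nonneg_left k11 (sq_nonneg _)
          have t2 : |(b * ε) ^ 2 * (A22 - 4/3 * (a * ε * (b * ε)) * M22)|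
              ≤ (b * ε) ^ 2 * (4 * (a * ε * (b * ε)) * e) := by
            rw [abs_mul, abs_of_nonneg (sq_nonneg (b * ε))]
            exact mul_le_mul_of_nonneg_left k22 (sq_nonneg _)
          have h1 : |(a * ε) ^ 2 * (A11 - 4/3 * (a * ε * (b * ε)) * M11)
              + (b * ε) ^ 2 * (A22 - 4/3 * (a * ε * (b * ε)) * M22)|
              ≤ (a * ε) ^ 2 * (4 * (a * ε * (b * ε)) * e)
                + (b * ε) ^ 2 * (4 * (a * ε * (b * ε)) * e) := by
            calc |(a * ε) ^ 2 * (A11 - 4/3 * (a * ε * (b * ε)) * M11)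
                + (b * ε) ^ 2 * (A22 - 4/3 * (a * ε * (b * ε)) * M22)|
                ≤ |(a * ε) ^ 2 * (A11 - 4/3 * (a * ε * (b * ε)) * M11)|
                  + |(b * ε) ^ 2 * (A22 - 4/3 * (a * ε * (b * ε)) * M22)| := abs_add_le _ _
              _ ≤ _ := by linarith
          have h2 : (a * ε) ^ 2 * (A11 - 4/3 * (a * ε * (b * ε)) * M11)
              + (b * ε) ^ 2 * (A22 - 4/3 * (a * ε * (b * ε)) * M22)
              = -(4/3 * (a * ε * (b * ε)) * (ε ^ 2 * (a ^ 2 * M11 + b ^ 2 * M22))) := by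
            linear_combination heq2
          rw [h2, abs_neg, abs_mul] at h1
          have hcoefpos : (0:ℝ) < 4/3 * (a * ε * (b * ε)) :=
            mul_pos (by norm_num) (mul_pos (mul_pos ha hεpos) (mul_pos hb hεpos))
          rw [abs_of_pos hcoefpos] at h1
          have h3 : |ε ^ 2 * (a ^ 2 * M11 + b ^ 2 * M22)|
              = ε ^ 2 * |a ^ 2 * M11 + b ^ 2 * M22| := by
            rw [abs_mul, abs_of_nonneg (sq_nonneg ε)]
          rw [h3] at h1
          nlinarith [h1, mul_pos (mul_pos ha hb) (pow_pos hεpos 4),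
            abs_nonneg (a ^ 2 * M11 + b ^ 2 * M22), he, pow_pos hεpos 2,
            mul_pos ha hb]
        by_contra hS0
        have hpos : 0 < |a ^ 2 * M11 + b ^ 2 * M22| := abs_pos.mpr hS0
        have hab2 : (0:ℝ) < a ^ 2 + b ^ 2 := by positivity
        have hk := key2 (|a ^ 2 * M11 + b ^ 2 * M22| / (6 * (a ^ 2 + b ^ 2)))
          (by positivity)
        have hcompute : 3 * (a ^ 2 + b ^ 2) *
            (|a ^ 2 * M11 + b ^ 2 * M22| / (6 * (a ^ 2 + b ^ 2)))
            = |a ^ 2 * M11 + b ^ 2 * M22| / 2 := by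
          field_simp
          ring
        rw [hcompute] at hk
        linarith
      have h11 := hS 1 1 one_pos one_pos
      have h21 := hS 2 1 two_pos one_pos
      norm_num at h11 h21
      constructor <;> linarith
    -- Assemble
    refine ⟨hA, ?_⟩
    by_cases hI : (Set.Ioo umin umax).Nonempty
    · by_cases hJ : (Set.Ioo vmin vmax).Nonempty
      · obtain ⟨us, hus⟩ := hI
        obtain ⟨vs, hvs⟩ := hJ
        refine ⟨fun u => g11 (u, vs), fun u => g22 (u, vs),
          fun v => g11 (us, v) - g11 (us, vs), fun v => g22 (us, v) - g22 (us, vs), ?_⟩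
        intro u hu v hv
        constructor
        · show g11 (u, v) = g11 (u, vs) + (g11 (us, v) - g11 (us, vs))
          have hsp := liouville_split hg11 (fun p hp' => (hMzero p hp').1) hus hvs u hu v hv
          linarith
        · show g22 (u, v) = g22 (u, vs) + (g22 (us, v) - g22 (us, vs))
          have hsp := liouville_split hg22 (fun p hp' => (hMzero p hp').2) hus hvs u hu v hv
          linarith
      · exact ⟨0, 0, 0, 0, fun u hu v hv => absurd ⟨v, hv⟩ hJ⟩
    · exact ⟨0, 0, 0, 0, fun u hu => absurd ⟨u, hu⟩ hI⟩
  · rintro ⟨h12, U1, U2, V1, V2, hUV⟩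
    intro u0 v0 α β hU hV
    have hm1 : ∀ t ∈ Set.uIcc (-1:ℝ) 1,
        (u0 + t * α) ∈ Set.Ioo umin umax ∧ (u0 - t * α) ∈ Set.Ioo umin umax ∧
          (v0 + t * β) ∈ Set.Ioo vmin vmax := by
      intro t ht
      have h1 := abs_mul_le_one (α := α) (abs_le_one_of_uIcc ht)
      have h2 := abs_mul_le_one (α := β) (abs_le_one_of_uIcc ht)
      exact ⟨hU (mem_Icc_center h1), hU (mem_Icc_center_sub h1), hV (mem_Icc_center h2)⟩
    have hmd1 : ∀ t ∈ Set.uIcc (-1:ℝ) 1,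
        ((u0 + t * α, v0 + t * β) : ℝ × ℝ) ∈ Set.Ioo umin umax ×ˢ Set.Ioo vmin vmax :=
      fun t ht => Set.mk_mem_prod (hm1 t ht).1 (hm1 t ht).2.2
    have hmd2 : ∀ t ∈ Set.uIcc (-1:ℝ) 1,
        ((u0 - t * α, v0 + t * β) : ℝ × ℝ) ∈ Set.Ioo umin umax ×ˢ Set.Ioo vmin vmax :=
      fun t ht => Set.mk_mem_prod (hm1 t ht).2.1 (hm1 t ht).2.2
    have c1 : ContinuousOn (fun t : ℝ =>
        α ^ 2 * g11 (u0 + t * α, v0 + t * β) +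
        2 * α * β * g12 (u0 + t * α, v0 + t * β) +
        β ^ 2 * g22 (u0 + t * α, v0 + t * β)) (Set.uIcc (-1:ℝ) 1) :=
      ((continuousOn_const.mul (hg11.continuousOn.comp
          (Continuous.continuousOn (by fun_prop)) hmd1)).add
        (continuousOn_const.mul (hg12.continuousOn.comp
          (Continuous.continuousOn (by fun_prop)) hmd1))).add
        (continuousOn_const.mul (hg22.continuousOn.comp
          (Continuous.continuousOn (by fun_prop)) hmd1))
    have c2 : ContinuousOn (fun t : ℝ =>
        α ^ 2 * g11 (u0 - t * α, v0 + t * β) -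
        2 * α * β * g12 (u0 - t * α, v0 + t * β) +
        β ^ 2 * g22 (u0 - t * α, v0 + t * β)) (Set.uIcc (-1:ℝ) 1) :=
      ((continuousOn_const.mul (hg11.continuousOn.comp
          (Continuous.continuousOn (by fun_prop)) hmd2)).sub
        (continuousOn_const.mul (hg12.continuousOn.comp
          (Continuous.continuousOn (by fun_prop)) hmd2))).add
        (continuousOn_const.mul (hg22.continuousOn.comp
          (Continuous.continuousOn (by fun_prop)) hmd2))
    have hsub : (∫ t in (-1:ℝ)..1,
          (α ^ 2 * g11 (u0 + t * α, v0 + t * β) +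
           2 * α * β * g12 (u0 + t * α, v0 + t * β) +
           β ^ 2 * g22 (u0 + t * α, v0 + t * β)))
        - (∫ t in (-1:ℝ)..1,
          (α ^ 2 * g11 (u0 - t * α, v0 + t * β) -
           2 * α * β * g12 (u0 - t * α, v0 + t * β) +
           β ^ 2 * g22 (u0 - t * α, v0 + t * β)))
        = ∫ t in (-1:ℝ)..1,
          ((α ^ 2 * g11 (u0 + t * α, v0 + t * β) +
           2 * α * β * g12 (u0 + t * α, v0 + t * β) +
           β ^ 2 * g22 (u0 + t * α, v0 + t * β)) -
           (α ^ 2 * g11 (u0 - t * α, v0 + t * β) -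
           2 * α * β * g12 (u0 - t * α, v0 + t * β) +
           β ^ 2 * g22 (u0 - t * α, v0 + t * β))) :=
      (intervalIntegral.integral_sub c1.intervalIntegrable c2.intervalIntegrable).symm
    have hcongr : (∫ t in (-1:ℝ)..1,
          ((α ^ 2 * g11 (u0 + t * α, v0 + t * β) +
           2 * α * β * g12 (u0 + t * α, v0 + t * β) +
           β ^ 2 * g22 (u0 + t * α, v0 + t * β)) -
           (α ^ 2 * g11 (u0 - t * α, v0 + t * β) -
           2 * α * β * g12 (u0 - t * α, v0 + t * β) +
           β ^ 2 * g22 (u0 - t * α, v0 + t * β))))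
        = ∫ t in (-1:ℝ)..1,
          (α ^ 2 * (U1 (u0 + t * α) - U1 (u0 - t * α)) +
           β ^ 2 * (U2 (u0 + t * α) - U2 (u0 - t * α))) := by
      apply intervalIntegral.integral_congr
      intro t ht
      obtain ⟨hu1, hu2, hv1⟩ := hm1 t ht
      have e11 := (hUV _ hu1 _ hv1).1
      have e11' := (hUV _ hu2 _ hv1).1
      have e22 := (hUV _ hu1 _ hv1).2
      have e22' := (hUV _ hu2 _ hv1).2
      have z1 := h12 _ (Set.mk_mem_prod hu1 hv1)
      have z2 := h12 _ (Set.mk_mem_prod hu2 hv1)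
      simp only [e11, e11', e22, e22', z1, z2]
      ring
    have hodd : (∫ t in (-1:ℝ)..1,
          (α ^ 2 * (U1 (u0 + t * α) - U1 (u0 - t * α)) +
           β ^ 2 * (U2 (u0 + t * α) - U2 (u0 - t * α)))) = 0 := by
      apply odd_integral
      intro t
      rw [show u0 + -t * α = u0 - t * α by ring, show u0 - -t * α = u0 + t * α by ring]
      ring
    linarith [hsub, hcongr, hodd]
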